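/- Let A be a k-algebra and K an algebraic field extension of k. If K ⊗_k A is catenarian, then A is catenarian. -/
import Mathlib


open Polynomial TensorProduct

/-- A ring satisfies MPC if its minimal primes are pairwise comaximal. -/
def MPC (A : Type*) [CommRing A] : Prop :=
  ∀ p ∈ minimalPrimes A, ∀ q ∈ minimalPrimes A, p ≠ q → p ⊔ q = ⊤

/-- A domain is an S-domain if every height-one prime `p` satisfies `ht (p[X]) = 1`. -/
def IsSDomain (D : Type*) [CommRing D] [IsDomain D] : Prop :=
  ∀ p : PrimeSpectrum D, Order.height p = 1 →
    ∀ P : PrimeSpectrum D[X], P.asIdeal = p.asIdeal.map (C : D →+* D[X]) →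
      Order.height P = 1

/-- A ring is a strong S-ring if the quotient by every prime is an S-domain. -/
def StrongSRing (A : Type*) [CommRing A] : Prop :=
  ∀ p : PrimeSpectrum A, IsSDomain (A ⧸ p.asIdeal)

/-- A ring is a stably strong S-ring if all polynomial rings over it in `n ≥ 1`
variables are strong S-rings. -/
def StablyStrongSRing (A : Type*) [CommRing A] : Prop :=
  ∀ n : ℕ, 0 < n → StrongSRing (MvPolynomial (Fin n) A)

/-- A ring is locally finite dimensional (LFD) if every prime has finite height. -/
def LFD (A : Type*) [CommRing A] : Prop :=
  ∀ p : PrimeSpectrum A, Order.height p ≠ ⊤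

/-- A ring is catenarian if it satisfies MPC, is LFD, and adjacent primes `P ⋖ Q`
satisfy `ht Q = ht P + 1`. -/
def Catenarian (A : Type*) [CommRing A] : Prop :=
  MPC A ∧ LFD A ∧
    ∀ P Q : PrimeSpectrum A, P ⋖ Q → Order.height Q = Order.height P + 1

/-- A ring is universally catenarian if all polynomial rings over it in `n ≥ 1`
variables are catenarian. -/
def UniversallyCatenarian (A : Type*) [CommRing A] : Prop :=
  ∀ n : ℕ, 0 < n → Catenarian (MvPolynomial (Fin n) A)

/-- An S-ring: MPC together with the quotient by each minimal prime being an S-domain. -/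
def SRing (A : Type*) [CommRing A] : Prop :=
  MPC A ∧ ∀ p : PrimeSpectrum A, p.asIdeal ∈ minimalPrimes A → IsSDomain (A ⧸ p.asIdeal)

/-- The transcendence degree of a `k`-algebra `A`: the supremum of the cardinalities
of algebraically independent subsets of `A` over `k`. -/
noncomputable def trdeg (k A : Type*) [CommRing k] [CommRing A] [Algebra k A] : Cardinal :=
  ⨆ s : {s : Set A // AlgebraicIndependent k ((↑) : s → A)}, Cardinal.mk s.1


section Aux

attribute [local instance] Algebra.TensorProduct.rightAlgebra

variable {k K A : Type*} [Field k] [Field K] [Algebra k K] [CommRing A] [Algebra k A]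

lemma tensor_isIntegral [Algebra.IsAlgebraic k K] :
    Algebra.IsIntegral A (K ⊗[k] A) := by
  constructor
  intro x
  induction x using TensorProduct.induction_on with
  | zero => exact isIntegral_zero
  | add x y hx hy => exact hx.add hy
  | tmul y a =>
      have hy : IsIntegral k y := (Algebra.IsAlgebraic.isAlgebraic (R := k) y).isIntegral
      have h2 : IsIntegral k ((y ⊗ₜ[k] 1 : K ⊗[k] A)) :=
        hy.map (Algebra.TensorProduct.includeLeft (S := k) : K →ₐ[k] K ⊗[k] A)
      have h1 : IsIntegral A ((y ⊗ₜ[k] 1 : K ⊗[k] A)) := h2.tower_top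
      have key : (y ⊗ₜ[k] a : K ⊗[k] A) = algebraMap A (K ⊗[k] A) a * (y ⊗ₜ[k] 1) := by
        show _ = (1 ⊗ₜ[k] a) * _
        rw [Algebra.TensorProduct.tmul_mul_tmul, one_mul, mul_one]
      rw [key]
      exact (isIntegral_algebraMap).mul h1

lemma tensor_inj : Function.Injective (algebraMap A (K ⊗[k] A)) := by
  have h1 : Function.Injective (LinearMap.rTensor A (Algebra.linearMap k K)) :=
    Module.Flat.rTensor_preserves_injective_linearMap _ (algebraMap k K).injective
  intro a b hab
  have key : ∀ c : A, algebraMap A (K ⊗[k] A) c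
      = LinearMap.rTensor A (Algebra.linearMap k K) ((1 : k) ⊗ₜ[k] c) := by
    intro c
    show (1 : K) ⊗ₜ[k] c = _
    rw [LinearMap.rTensor_tmul]
    simp
  have h3 : (1 : k) ⊗ₜ[k] a = (1 : k) ⊗ₜ[k] b := h1 (by rw [← key, ← key]; exact hab)
  have h2 := congrArg (TensorProduct.lid k A) h3
  simpa using h2

lemma tensor_mem_map_iff (p : Ideal A) [p.IsPrime] (x : K ⊗[k] A) :
    x ∈ p.map (algebraMap A (K ⊗[k] A)) ↔
      (Algebra.TensorProduct.map (AlgHom.id k K) (Ideal.Quotient.mkₐ k p)) x = 0 := by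
  set G := Algebra.TensorProduct.map (AlgHom.id k K) (Ideal.Quotient.mkₐ k p) with hG
  constructor
  · intro hx
    have hle : p.map (algebraMap A (K ⊗[k] A)) ≤ RingHom.ker (G : K ⊗[k] A →+* K ⊗[k] (A ⧸ p)) := by
      rw [Ideal.map_le_iff_le_comap]
      intro y hy
      show G (algebraMap A (K ⊗[k] A) y) = 0
      show G ((1 : K) ⊗ₜ[k] y) = 0
      rw [hG]
      rw [Algebra.TensorProduct.map_tmul]
      simp [Ideal.Quotient.eq_zero_iff_mem.mpr hy]
    exact hle hx
  · intro hx
    set ι : (p.restrictScalars k) →ₗ[k] A := Submodule.subtype _ with hι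
    set π : A →ₗ[k] A ⧸ p := (Ideal.Quotient.mkₐ k p).toLinearMap with hπ
    have hexact : Function.Exact ι π := by
      intro y
      constructor
      · intro hy
        have : y ∈ p := Ideal.Quotient.eq_zero_iff_mem.mp hy
        exact ⟨⟨y, this⟩, rfl⟩
      · rintro ⟨⟨z, hz⟩, rfl⟩
        exact Ideal.Quotient.eq_zero_iff_mem.mpr hz
    have htexact := Module.Flat.lTensor_exact K hexact
    have hGL : (G : K ⊗[k] A →ₗ[k] K ⊗[k] (A ⧸ p)) = LinearMap.lTensor K π :=
      TensorProduct.ext' fun y a => by simp [hG, hπ]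
    have hx' : LinearMap.lTensor K π x = 0 := by rw [← hGL]; exact hx
    obtain ⟨z, hz⟩ := (htexact x).mp hx'
    rw [← hz]
    clear hz hx hx'
    induction z using TensorProduct.induction_on with
    | zero => simp
    | add u v hu hv => rw [map_add]; exact Ideal.add_mem _ hu hv
    | tmul y m =>
        obtain ⟨m, hm⟩ := m
        have : LinearMap.lTensor K ι (y ⊗ₜ[k] (⟨m, hm⟩ : p.restrictScalars k)) = y ⊗ₜ[k] m := rfl
        rw [this]
        have h1 : (1 : K) ⊗ₜ[k] m ∈ p.map (algebraMap A (K ⊗[k] A)) :=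
          Ideal.mem_map_of_mem _ hm
        have h2 : (y ⊗ₜ[k] m : K ⊗[k] A) = (y ⊗ₜ[k] (1 : A)) * ((1 : K) ⊗ₜ[k] m) := by
          rw [Algebra.TensorProduct.tmul_mul_tmul, mul_one, one_mul]
        rw [h2]
        exact Ideal.mul_mem_left _ _ h1

lemma tensor_cancel (p : Ideal A) [p.IsPrime] {a : A} (ha : a ∉ p) {b : K ⊗[k] A}
    (hb : algebraMap A (K ⊗[k] A) a * b ∈ p.map (algebraMap A (K ⊗[k] A))) :
    b ∈ p.map (algebraMap A (K ⊗[k] A)) := by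
  rw [tensor_mem_map_iff] at hb ⊢
  set G := Algebra.TensorProduct.map (AlgHom.id k K) (Ideal.Quotient.mkₐ k p) with hG
  rw [map_mul] at hb
  have hGa : G (algebraMap A (K ⊗[k] A) a) = (1 : K) ⊗ₜ[k] (Ideal.Quotient.mk p a) := by
    show G ((1 : K) ⊗ₜ[k] a) = _
    rw [hG, Algebra.TensorProduct.map_tmul]
    rfl
  rw [hGa] at hb
  have hane : (Ideal.Quotient.mk p a) ≠ 0 := fun h => ha (Ideal.Quotient.eq_zero_iff_mem.mp h)
  have hmul : LinearMap.mulLeft k ((1 : K) ⊗ₜ[k] (Ideal.Quotient.mk p a))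
      = LinearMap.lTensor K (LinearMap.mulLeft k (Ideal.Quotient.mk p a)) :=
    TensorProduct.ext' fun y c => by
      simp [LinearMap.mulLeft_apply, Algebra.TensorProduct.tmul_mul_tmul]
  have hinj : Function.Injective (LinearMap.lTensor K (LinearMap.mulLeft k (Ideal.Quotient.mk p a))) :=
    Module.Flat.lTensor_preserves_injective_linearMap _
      (fun x y hxy => mul_left_cancel₀ hane hxy)
  apply hinj
  have : LinearMap.lTensor K (LinearMap.mulLeft k (Ideal.Quotient.mk p a)) (G b)
      = (1 : K) ⊗ₜ[k] (Ideal.Quotient.mk p a) * G b := by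
    rw [← hmul]; rfl
  rw [this, hb, map_zero]

end Aux
section Aux2

attribute [local instance] Algebra.TensorProduct.rightAlgebra

variable {k K A : Type*} [Field k] [Field K] [Algebra k K] [CommRing A] [Algebra k A]
  [Algebra.IsAlgebraic k K]

lemma tensor_liesOver (p : Ideal A) [p.IsPrime] :
    ∃ P : Ideal (K ⊗[k] A), P.IsPrime ∧ P.comap (algebraMap A (K ⊗[k] A)) = p := by
  haveI := tensor_isIntegral (k := k) (K := K) (A := A)
  obtain ⟨Q, _, hQ, hQ'⟩ := Ideal.exists_ideal_over_prime_of_isIntegral p (⊥ : Ideal (K ⊗[k] A))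
    (by intro x hx
        have : algebraMap A (K ⊗[k] A) x = 0 := hx
        have : x = 0 := tensor_inj (by rw [this, map_zero])
        rw [this]; exact p.zero_mem)
  exact ⟨Q, hQ, hQ'⟩

lemma tensor_goingDown (p : Ideal A) [p.IsPrime] (Q : Ideal (K ⊗[k] A)) [Q.IsPrime]
    (hpq : p ≤ Q.comap (algebraMap A (K ⊗[k] A))) :
    ∃ P : Ideal (K ⊗[k] A), P.IsPrime ∧ P ≤ Q ∧ P.comap (algebraMap A (K ⊗[k] A)) = p := by
  set T : Submonoid (K ⊗[k] A) :=
    (p.primeCompl.map (algebraMap A (K ⊗[k] A))) ⊔ Q.primeCompl with hT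
  have hdisj : Disjoint ((p.map (algebraMap A (K ⊗[k] A)) : Ideal (K ⊗[k] A)) : Set (K ⊗[k] A))
      (T : Set (K ⊗[k] A)) := by
    rw [Set.disjoint_left]
    rintro x hx hxT
    rw [hT, SetLike.mem_coe, Submonoid.mem_sup] at hxT
    obtain ⟨y, hy, z, hz, rfl⟩ := hxT
    obtain ⟨a, ha, rfl⟩ := hy
    have hzmem : z ∈ p.map (algebraMap A (K ⊗[k] A)) := tensor_cancel p ha hx
    have : z ∈ Q := Ideal.map_le_iff_le_comap.mpr hpq hzmem
    exact hz this
  obtain ⟨P, hP, hle, hPdisj⟩ := Ideal.exists_le_prime_disjoint _ T hdisj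
  refine ⟨P, hP, ?_, ?_⟩
  · intro x hx
    by_contra hxQ
    exact Set.disjoint_left.mp hPdisj hx (by
      rw [hT, SetLike.mem_coe]
      exact Submonoid.mem_sup.mpr ⟨1, Submonoid.one_mem _, x, hxQ, one_mul x⟩)
  · apply le_antisymm
    · intro x hx
      by_contra hxp
      refine Set.disjoint_left.mp hPdisj hx ?_
      rw [hT, SetLike.mem_coe]
      exact Submonoid.mem_sup.mpr
        ⟨algebraMap A (K ⊗[k] A) x, Submonoid.mem_map_of_mem _ hxp, 1, Submonoid.one_mem _,
          mul_one _⟩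
    · exact Ideal.map_le_iff_le_comap.mp hle

open PrimeSpectrum in
lemma tensor_comap_strictMono :
    StrictMono (fun P : PrimeSpectrum (K ⊗[k] A) =>
      PrimeSpectrum.comap (algebraMap A (K ⊗[k] A)) P) := by
  haveI := tensor_isIntegral (k := k) (K := K) (A := A)
  intro P Q hPQ
  rw [← PrimeSpectrum.asIdeal_lt_asIdeal] at hPQ ⊢
  obtain ⟨x, hxQ, hxP⟩ := SetLike.exists_of_lt hPQ
  haveI := P.isPrime
  exact Ideal.comap_lt_comap_of_integral_mem_sdiff hPQ.le ⟨hxQ, hxP⟩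
    (Algebra.IsIntegral.isIntegral x)

open PrimeSpectrum in
lemma tensor_lift_chain : ∀ (n : ℕ) (Q : PrimeSpectrum (K ⊗[k] A))
    (s : LTSeries (PrimeSpectrum A)), s.length = n →
    s.last = PrimeSpectrum.comap (algebraMap A (K ⊗[k] A)) Q →
    ∃ t : LTSeries (PrimeSpectrum (K ⊗[k] A)), t.length = n ∧ t.last = Q := by
  intro n
  induction n with
  | zero => intro Q s _ _; exact ⟨RelSeries.singleton _ Q, rfl, rfl⟩
  | succ n ih =>
    intro Q s hlen hlast
    have hne : s.length ≠ 0 := by omega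
    have hlt : s.eraseLast.last < s.last := s.eraseLast_last_rel_last hne
    rw [hlast] at hlt
    haveI := Q.isPrime
    haveI := s.eraseLast.last.isPrime
    obtain ⟨P, hP, hle, hcomap⟩ := tensor_goingDown s.eraseLast.last.asIdeal Q.asIdeal hlt.le
    set P' : PrimeSpectrum (K ⊗[k] A) := ⟨P, hP⟩ with hP'
    have hcm : PrimeSpectrum.comap (algebraMap A (K ⊗[k] A)) P' = s.eraseLast.last :=
      PrimeSpectrum.ext hcomap
    have hPQ : P' < Q := by
      rw [← PrimeSpectrum.asIdeal_lt_asIdeal]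
      refine lt_of_le_of_ne hle ?_
      intro hEq
      have : s.eraseLast.last = PrimeSpectrum.comap (algebraMap A (K ⊗[k] A)) Q := by
        rw [← hcm]; congr 1; exact PrimeSpectrum.ext hEq
      rw [← this] at hlt
      exact lt_irrefl _ hlt
    obtain ⟨t, htlen, htlast⟩ := ih P' s.eraseLast
      (by rw [RelSeries.eraseLast_length, hlen]; omega) hcm.symm
    refine ⟨t.snoc Q (htlast ▸ hPQ), ?_, ?_⟩
    · rw [RelSeries.snoc_length, htlen]
    · exact RelSeries.last_snoc _ _ _

end Aux2
section Aux3

attribute [local instance] Algebra.TensorProduct.rightAlgebra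

variable {k K A : Type*} [Field k] [Field K] [Algebra k K] [CommRing A] [Algebra k A]
  [Algebra.IsAlgebraic k K]

lemma tensor_height_eq (Q : PrimeSpectrum (K ⊗[k] A)) :
    Order.height (PrimeSpectrum.comap (algebraMap A (K ⊗[k] A)) Q) = Order.height Q := by
  apply le_antisymm
  · apply Order.height_le
    intro s hlast
    obtain ⟨t, htlen, htlast⟩ := tensor_lift_chain s.length Q s rfl hlast
    calc (s.length : ℕ∞) = (t.length : ℕ∞) := by rw [htlen]
      _ ≤ Order.height t.last := Order.length_le_height_last
      _ = Order.height Q := by rw [htlast]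
  · exact Order.height_le_height_apply_of_strictMono _ tensor_comap_strictMono Q

end Aux3

section Main
attribute [local instance] Algebra.TensorProduct.rightAlgebra

/-- If `K/k` is an algebraic field extension and `K ⊗ₖ A` is
catenarian, then `A` is catenarian. -/
theorem stmt15 {k K A : Type*} [Field k] [Field K] [Algebra k K]
    [Algebra.IsAlgebraic k K] [CommRing A] [Nontrivial A] [Algebra k A]
    (h : Catenarian (K ⊗[k] A)) : Catenarian A := by
  obtain ⟨hMPC, hLFD, hCov⟩ := h
  refine ⟨?_, ?_, ?_⟩
  · -- MPC
    intro p hp q hq hne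
    by_contra hne'
    obtain ⟨m, hm, hlem⟩ := Ideal.exists_le_maximal _ hne'
    haveI : m.IsPrime := hm.isPrime
    haveI : p.IsPrime := hp.1.1
    haveI : q.IsPrime := hq.1.1
    obtain ⟨M, hM, hMc⟩ := tensor_liesOver (k := k) (K := K) m
    haveI := hM
    have hpM : p ≤ M.comap (algebraMap A (K ⊗[k] A)) := by
      rw [hMc]; exact le_trans le_sup_left hlem
    have hqM : q ≤ M.comap (algebraMap A (K ⊗[k] A)) := by
      rw [hMc]; exact le_trans le_sup_right hlem
    obtain ⟨P, hP, hPle, hPc⟩ := tensor_goingDown p M hpM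
    obtain ⟨Q, hQ, hQle, hQc⟩ := tensor_goingDown q M hqM
    obtain ⟨P'', hP''min, hP''le⟩ := Ideal.exists_minimalPrimes_le (I := (⊥ : Ideal (K ⊗[k] A)))
      (J := P) (by haveI := hP; exact bot_le)
    obtain ⟨Q'', hQ''min, hQ''le⟩ := Ideal.exists_minimalPrimes_le (I := (⊥ : Ideal (K ⊗[k] A)))
      (J := Q) (by haveI := hQ; exact bot_le)
    have hP''min' : P'' ∈ minimalPrimes (K ⊗[k] A) := hP''min
    have hQ''min' : Q'' ∈ minimalPrimes (K ⊗[k] A) := hQ''min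
    have hP''c : P''.comap (algebraMap A (K ⊗[k] A)) = p := by
      haveI : P''.IsPrime := hP''min'.1.1
      refine le_antisymm (by rw [← hPc]; exact Ideal.comap_mono hP''le) ?_
      exact hp.2 ⟨Ideal.IsPrime.comap _, bot_le⟩ (by rw [← hPc]; exact Ideal.comap_mono hP''le)
    have hQ''c : Q''.comap (algebraMap A (K ⊗[k] A)) = q := by
      haveI : Q''.IsPrime := hQ''min'.1.1
      refine le_antisymm (by rw [← hQc]; exact Ideal.comap_mono hQ''le) ?_
      exact hq.2 ⟨Ideal.IsPrime.comap _, bot_le⟩ (by rw [← hQc]; exact Ideal.comap_mono hQ''le)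
    have hPQne : P'' ≠ Q'' := by
      intro hEq; apply hne; rw [← hP''c, ← hQ''c, hEq]
    have htop := hMPC P'' hP''min' Q'' hQ''min' hPQne
    have : P'' ⊔ Q'' ≤ M := sup_le (hP''le.trans hPle) (hQ''le.trans hQle)
    rw [htop, top_le_iff] at this
    exact hM.ne_top this
  · -- LFD
    intro p
    haveI := p.isPrime
    obtain ⟨P, hP, hPc⟩ := tensor_liesOver (k := k) (K := K) p.asIdeal
    set P' : PrimeSpectrum (K ⊗[k] A) := ⟨P, hP⟩
    have : PrimeSpectrum.comap (algebraMap A (K ⊗[k] A)) P' = p := PrimeSpectrum.ext hPc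
    rw [← this, tensor_height_eq]
    exact hLFD P'
  · -- covering
    intro P Q hPQ
    haveI := Q.isPrime
    haveI := P.isPrime
    obtain ⟨Q0, hQ0, hQ0c⟩ := tensor_liesOver (k := k) (K := K) Q.asIdeal
    set Q' : PrimeSpectrum (K ⊗[k] A) := ⟨Q0, hQ0⟩ with hQ'
    have hQcm : PrimeSpectrum.comap (algebraMap A (K ⊗[k] A)) Q' = Q := PrimeSpectrum.ext hQ0c
    obtain ⟨P0, hP0, hP0le, hP0c⟩ := tensor_goingDown P.asIdeal Q0
      (by rw [show Q0.comap (algebraMap A (K ⊗[k] A)) = Q.asIdeal from hQ0c]; exact hPQ.1.le)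
    set P' : PrimeSpectrum (K ⊗[k] A) := ⟨P0, hP0⟩ with hP'
    have hPcm : PrimeSpectrum.comap (algebraMap A (K ⊗[k] A)) P' = P := PrimeSpectrum.ext hP0c
    have hlt : P' < Q' := by
      rw [← PrimeSpectrum.asIdeal_lt_asIdeal]
      refine lt_of_le_of_ne hP0le fun hEq => ?_
      have : P = Q := by
        rw [← hPcm, ← hQcm]; congr 1; exact PrimeSpectrum.ext hEq
      exact hPQ.1.ne this
    have hcov : P' ⋖ Q' := by
      refine ⟨hlt, fun R hR1 hR2 => ?_⟩
      have h1 := tensor_comap_strictMono hR1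
      have h2 := tensor_comap_strictMono hR2
      simp only [] at h1 h2
      rw [hPcm] at h1
      rw [hQcm] at h2
      exact hPQ.2 h1 h2
    have := hCov P' Q' hcov
    rw [← hQcm, ← hPcm, tensor_height_eq, tensor_height_eq]
    exact this

end Main
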